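/- arXiv:1106.1545 — 4 statements merged into one kernel-verified Lean document; each statement's English description precedes it below -/
import Mathlib

section
/- Let A and B be commuting nilpotent n × n matrices with Jordan types λ = (λ₁, ..., λ_t) and μ = (μ₁, ..., μ_s) respectively. If s ≥ n − λ_t/2 (where λ_t is the smallest part of λ), then μ₁ ≤ 2, i.e., A² = 0. -/
set_option maxHeartbeats 1000000
set_option synthInstance.maxHeartbeats 400000


open Matrix

/-- `l` is a partition of `n`: nonincreasing list of positive integers summing to `n`. -/
def IsPartition (n : ℕ) (l : List ℕ) : Prop :=
  l.Pairwise (· ≥ ·) ∧ (∀ x ∈ l, 0 < x) ∧ l.sum = n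

/-- A partition is almost rectangular if any two parts differ by at most 1. -/
def AlmostRect (l : List ℕ) : Prop := ∀ a ∈ l, ∀ b ∈ l, a ≤ b + 1

/-- The unique almost rectangular partition of `n` with `t` parts:
`⌈n/t⌉` repeated `r` times followed by `⌊n/t⌋` repeated `t - r` times, `r = n - t⌊n/t⌋`. -/
def ARP (n t : ℕ) : List ℕ :=
  List.replicate (n - t * (n / t)) (n / t + 1) ++
    List.replicate (t - (n - t * (n / t))) (n / t)

/-- A nilpotent matrix `A` has Jordan type `l` iff `l` is a partition of `n` and the rank
of every power `A ^ i` equals `∑_p max(p - i, 0)` over the parts `p` of `l`; this rank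
condition characterizes the Jordan canonical form of a nilpotent matrix. -/
def HasJordanType {K : Type*} [Field K] {n : ℕ} (A : Matrix (Fin n) (Fin n) K)
    (l : List ℕ) : Prop :=
  IsPartition n l ∧ ∀ i : ℕ, (A ^ i).rank = (l.map fun p => p - i).sum

/-- The `m × m` nilpotent upper triangular Jordan block. -/
def Jblock (K : Type*) [Field K] (m : ℕ) : Matrix (Fin m) (Fin m) K :=
  Matrix.of fun i j => if (i : ℕ) + 1 = (j : ℕ) then 1 else 0

/-- `DEq K n lam mu` expresses `D(lam) = mu`: some nilpotent matrix of Jordan type `mu`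
commutes with a nilpotent matrix of Jordan type `lam`, and `mu` dominates every Jordan
type occurring in the nilpotent commutator of a matrix of type `lam`. -/
def DEq (K : Type*) [Field K] (n : ℕ) (lam mu : List ℕ) : Prop :=
  (∃ A B : Matrix (Fin n) (Fin n) K,
      A * B = B * A ∧ HasJordanType B lam ∧ HasJordanType A mu) ∧
  ∀ nu : List ℕ,
    (∃ A B : Matrix (Fin n) (Fin n) K,
      A * B = B * A ∧ HasJordanType B lam ∧ HasJordanType A nu) →
    ∀ k : ℕ, (nu.take k).sum ≤ (mu.take k).sum

/-- A rectangular matrix that is upper triangular and constant along diagonals. -/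
def UTToeplitz {K : Type*} [Field K] {p r : ℕ} (M : Matrix (Fin p) (Fin r) K) : Prop :=
  (∀ (i : Fin p) (j : Fin r), (j : ℕ) < (i : ℕ) → M i j = 0) ∧
  (∀ (i i' : Fin p) (j j' : Fin r),
    (j : ℕ) + (i' : ℕ) = (j' : ℕ) + (i : ℕ) → M i j = M i' j')

lemma aux_sum_sub : ∀ (l : List ℕ) (k : ℕ), (∀ x ∈ l, k ≤ x) →
    k * l.length ≤ l.sum ∧ (l.map fun p => p - k).sum = l.sum - k * l.length := by
  intro l k h
  induction l with
  | nil => simp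
  | cons a tl ih =>
    have ha := h a (by simp)
    obtain ⟨h1, h2⟩ := ih (fun x hx => h x (by simp [hx]))
    simp only [List.map_cons, List.sum_cons, List.length_cons, Nat.mul_succ]
    omega

lemma aux_getLast_le : ∀ (l : List ℕ) (hne : l ≠ []), l.Pairwise (· ≥ ·) →
    ∀ x ∈ l, l.getLast hne ≤ x := by
  intro l
  induction l with
  | nil => simp
  | cons a tl ih =>
    intro hne hs x hx
    obtain ⟨ha, hs'⟩ := List.pairwise_cons.mp hs
    by_cases htl : tl = []
    · subst htl
      simp only [List.mem_singleton] at hx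
      subst hx
      simp [List.getLast]
    · rw [List.getLast_cons htl]
      rcases List.mem_cons.mp hx with rfl | hx'
      · exact ha _ (List.getLast_mem htl)
      · exact ih htl hs' x hx'

lemma aux_mulVecLin_pow {K : Type*} [Field K] {n : ℕ} (M : Matrix (Fin n) (Fin n) K)
    (i : ℕ) : (M ^ i).mulVecLin = M.mulVecLin ^ i := by
  induction i with
  | zero => rw [pow_zero, pow_zero, Matrix.mulVecLin_one]; rfl
  | succ i ih => rw [pow_succ, pow_succ, Matrix.mulVecLin_mul, ih, Module.End.mul_eq_comp]

/-- If commuting nilpotent `A`, `B` have types `μ`, `λ` and the number `s` of parts of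
`μ` satisfies `s ≥ n - λ_t/2` (i.e. `2s + λ_t ≥ 2n`), then `μ₁ ≤ 2`, i.e. `A² = 0`. -/
theorem stmt8 {K : Type*} [Field K] [IsAlgClosed K] [CharZero K] {n : ℕ}
    (A B : Matrix (Fin n) (Fin n) K) (hc : A * B = B * A)
    (lam mu : List ℕ) (hne : lam ≠ [])
    (hB : HasJordanType B lam) (hA : HasJordanType A mu)
    (hs : 2 * n ≤ 2 * mu.length + lam.getLast hne) :
    A ^ 2 = 0 ∧ ∀ x ∈ mu, x ≤ 2 := by
  classical
  obtain ⟨⟨hlsort, hlpos, hlsum⟩, hlrank⟩ := hB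
  obtain ⟨⟨hmsort, hmpos, hmsum⟩, hmrank⟩ := hA
  set s := mu.length with hsdef
  set m := lam.getLast hne with hmdef
  have hml : ∀ x ∈ lam, m ≤ x := aux_getLast_le lam hne hlsort
  -- s ≤ n
  have hsn : s ≤ n := by
    have := (aux_sum_sub mu 1 (fun x hx => hmpos x hx)).1
    omega
  -- rank A = n - s
  have hrA : A.rank = n - s := by
    have h1 := hmrank 1
    rw [pow_one] at h1
    rw [h1, (aux_sum_sub mu 1 (fun x hx => hmpos x hx)).2, hmsum, one_mul]
  set r := n - s with hrdef
  have hrm : 2 * r ≤ m := by omega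
  set c := m - r with hcdef
  have hrc : r + c = m := by omega
  -- linear maps
  set b := B.mulVecLin with hbdef
  set a := A.mulVecLin with hadef
  have hab : ∀ v, a (b v) = b (a v) := by
    intro v
    have h := congrArg Matrix.mulVecLin hc
    rw [Matrix.mulVecLin_mul, Matrix.mulVecLin_mul] at h
    exact congrFun (congrArg (⇑) h) v
  have habp : ∀ (i : ℕ) (v), a ((b ^ i) v) = (b ^ i) (a v) := by
    intro i
    induction i with
    | zero => intro v; simp
    | succ i ih =>
      intro v
      rw [pow_succ, Module.End.mul_apply, Module.End.mul_apply, ih (b v), hab v]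
  have hfr : Module.finrank K (Fin n → K) = n := by simp
  -- b ^ n = 0
  have hbn : b ^ n = 0 := by
    have h0 : (B ^ n).rank = 0 := by
      rw [hlrank n]
      refine List.sum_eq_zero ?_
      intro x hx
      obtain ⟨p, hp, rfl⟩ := List.mem_map.mp hx
      have hpn : p ≤ n := hlsum ▸ List.le_sum_of_mem hp
      omega
    have hr0 : LinearMap.range ((B ^ n).mulVecLin) = ⊥ :=
      Submodule.finrank_eq_zero.mp h0
    rw [aux_mulVecLin_pow] at hr0
    exact LinearMap.range_eq_bot.mp hr0
  -- dimensions of kernels of powers of b up to m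
  have htm : m * lam.length ≤ n := by
    have := (aux_sum_sub lam m hml).1
    omega
  have hkeri : ∀ i, i ≤ m → Module.finrank K (LinearMap.ker (b ^ i)) = i * lam.length := by
    intro i hi
    have hrn := LinearMap.finrank_range_add_finrank_ker (b ^ i)
    rw [hfr] at hrn
    have h1 : Module.finrank K (LinearMap.range (b ^ i)) = n - i * lam.length := by
      rw [← aux_mulVecLin_pow]
      have h2 := hlrank i
      rw [(aux_sum_sub lam i (fun x hx => le_trans hi (hml x hx))).2, hlsum] at h2
      exact h2
    have h3 : i * lam.length ≤ m * lam.length := Nat.mul_le_mul_right lam.length hi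
    omega
  -- range a is b-invariant, of dimension r
  have hWinv : ∀ x ∈ LinearMap.range a, b x ∈ LinearMap.range a := by
    rintro x ⟨v, rfl⟩
    exact ⟨b v, hab v⟩
  have hWr : Module.finrank K (LinearMap.range a) = r := hrA
  -- b ^ r kills range a
  have hbra : ∀ x ∈ LinearMap.range a, (b ^ r) x = 0 := by
    have hnil : IsNilpotent (b.restrict hWinv) := by
      refine ⟨n, ?_⟩
      rw [Module.End.pow_restrict]
      ext x
      simp [hbn]
    have hpow0 : (b.restrict hWinv) ^ r = 0 := by
      have hch := hnil.charpoly_eq_X_pow_finrank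
      rw [hWr] at hch
      have := LinearMap.aeval_self_charpoly (b.restrict hWinv)
      rw [hch] at this
      simpa only [map_pow, Polynomial.aeval_X] using this
    rw [Module.End.pow_restrict] at hpow0
    intro x hx
    have := congrFun (congrArg (⇑) hpow0) ⟨x, hx⟩
    simpa [LinearMap.restrict_apply, Subtype.ext_iff] using this
  -- range (b ^ r) ≤ ker a
  have hrk : LinearMap.range (b ^ r) ≤ LinearMap.ker a := by
    rintro x ⟨v, rfl⟩
    rw [LinearMap.mem_ker, habp r v]
    exact hbra (a v) ⟨v, rfl⟩
  -- ker (b ^ r) ≤ range (b ^ r)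
  have hbm : (b ^ m) = (b ^ r) * (b ^ c) := by rw [← pow_add, hrc]
  have hkm_eq : LinearMap.ker (b ^ m) = Submodule.comap (b ^ c) (LinearMap.ker (b ^ r)) := by
    ext x
    simp [hbm, LinearMap.mem_ker, Submodule.mem_comap, Module.End.mul_apply]
  have hkerc_le : LinearMap.ker (b ^ c) ≤ LinearMap.ker (b ^ m) := by
    intro x hx
    rw [hkm_eq, Submodule.mem_comap]
    rw [LinearMap.mem_ker] at hx
    rw [hx]
    simp
  have hS_le : Submodule.map (b ^ c) (LinearMap.ker (b ^ m)) ≤ LinearMap.ker (b ^ r) := by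
    rw [hkm_eq]
    exact Submodule.map_comap_le _ _
  have hfrS : Module.finrank K (Submodule.map (b ^ c) (LinearMap.ker (b ^ m))) = r * lam.length := by
    have hrn := LinearMap.finrank_range_add_finrank_ker ((b ^ c).domRestrict (LinearMap.ker (b ^ m)))
    rw [LinearMap.range_domRestrict, LinearMap.ker_domRestrict] at hrn
    have e := Submodule.comapSubtypeEquivOfLe hkerc_le
    have hfe : Module.finrank K
        (Submodule.comap (LinearMap.ker (b ^ m)).subtype (LinearMap.ker (b ^ c))) =
        Module.finrank K (LinearMap.ker (b ^ c)) := e.finrank_eq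
    rw [hfe] at hrn
    rw [hkeri c (by omega), hkeri m le_rfl] at hrn
    have hmul : r * lam.length + c * lam.length = m * lam.length := by rw [← Nat.add_mul, hrc]
    omega
  have hkr_eq : Submodule.map (b ^ c) (LinearMap.ker (b ^ m)) = LinearMap.ker (b ^ r) := by
    refine Submodule.eq_of_le_of_finrank_eq hS_le ?_
    rw [hfrS, hkeri r (by omega)]
  have hkr_le : LinearMap.ker (b ^ r) ≤ LinearMap.range (b ^ r) := by
    rw [← hkr_eq]
    rintro x ⟨y, _, rfl⟩
    refine ⟨(b ^ (c - r)) y, ?_⟩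
    rw [← Module.End.mul_apply, ← pow_add]
    congr 2
    omega
  -- conclude A ^ 2 = 0
  have hA2lin : (A ^ 2).mulVecLin = 0 := by
    rw [aux_mulVecLin_pow]
    apply LinearMap.ext
    intro v
    have h1 : a v ∈ LinearMap.ker a :=
      hrk (hkr_le (hbra (a v) ⟨v, rfl⟩))
    rw [LinearMap.mem_ker] at h1
    simp only [pow_two, Module.End.mul_apply, LinearMap.zero_apply]
    exact h1
  have hA2 : A ^ 2 = 0 := by
    apply Matrix.toLin'.injective
    rw [Matrix.toLin'_apply', hA2lin, map_zero]
  refine ⟨hA2, ?_⟩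
  intro x hx
  have h2 := hmrank 2
  rw [hA2, Matrix.rank_zero] at h2
  have hx2 : x - 2 ≤ (mu.map fun p => p - 2).sum :=
    List.le_sum_of_mem (List.mem_map.mpr ⟨x, hx, rfl⟩)
  omega
end

section
/- Let λ = (λ₁, ..., λ_t) be a partition of n with t ≥ 3 parts and smallest part λ_t ≥ 4. Then there do not exist commuting nilpotent n × n matrices A and B with Jordan type of B equal to λ and Jordan type of A equal to (3, 1^{n−3}). -/
open Matrix

open Module


lemma sum_map_sub_add (k : ℕ) : ∀ (l : List ℕ), (∀ x ∈ l, k ≤ x) →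
    (l.map (fun p => p - k)).sum + k * l.length = l.sum := by
  intro l
  induction l with
  | nil => simp
  | cons a l ih =>
    intro h
    have ha := h a (List.mem_cons_self)
    have h2 := ih (fun x hx => h x (List.mem_cons_of_mem _ hx))
    simp only [List.map_cons, List.sum_cons, List.length_cons, Nat.mul_succ]
    omega

lemma getLast_le_of_sorted : ∀ (l : List ℕ), l.Pairwise (· ≥ ·) → ∀ (hne : l ≠ [])
    (x : ℕ), x ∈ l → l.getLast hne ≤ x := by
  intro l
  induction l with
  | nil => simp
  | cons a l ih =>
    intro hs hne x hx
    rcases List.eq_nil_or_concat l with h | _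
    · subst h
      simp only [List.mem_singleton] at hx
      subst hx
      simp [List.getLast_singleton]
    · have hlne : l ≠ [] := by rintro rfl; simp_all
      rw [List.getLast_cons hlne]
      rcases List.mem_cons.mp hx with rfl | hx'
      · exact (List.pairwise_cons.mp hs).1 _ (List.getLast_mem hlne)
      · exact ih (List.pairwise_cons.mp hs).2 hlne x hx'

lemma mulVecLin_pow' {K : Type*} [CommRing K] {n : ℕ} (M : Matrix (Fin n) (Fin n) K) :
    ∀ k : ℕ, (M ^ k).mulVecLin = M.mulVecLin ^ k
  | 0 => by simp [Matrix.mulVecLin_one, Module.End.one_eq_id]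
  | k + 1 => by
      rw [pow_succ, Matrix.mulVecLin_mul, mulVecLin_pow' M k, pow_succ]
      rfl


set_option maxHeartbeats 1000000 in
set_option synthInstance.maxHeartbeats 400000 in
/-- If `λ` has at least 3 parts, all of size at least 4, then no nilpotent matrix of
type `λ` commutes with a nilpotent matrix of type `(3, 1^{n-3})`. -/
theorem stmt9 {K : Type*} [Field K] [IsAlgClosed K] [CharZero K] {n : ℕ}
    (lam : List ℕ) (hlam : IsPartition n lam) (hne : lam ≠ [])
    (ht : 3 ≤ lam.length) (hmin : 4 ≤ lam.getLast hne) :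
    ¬ ∃ A B : Matrix (Fin n) (Fin n) K, A * B = B * A ∧ HasJordanType B lam ∧
        HasJordanType A (3 :: List.replicate (n - 3) 1) := by
  rintro ⟨A, B, hAB, hB, hA⟩
  classical
  have hall4 : ∀ p ∈ lam, 4 ≤ p := fun p hp =>
    le_trans hmin (getLast_le_of_sorted lam hlam.1 hne p hp)
  have hsum : lam.sum = n := hlam.2.2
  set t := lam.length with hts
  -- ranks of A and A^2
  have hrA : A.rank = 2 := by
    have h1 := hA.2 1
    rw [pow_one] at h1
    rw [h1]
    simp
  have hrA2 : (A ^ 2).rank = 1 := by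
    rw [hA.2 2]
    simp
  -- B is nilpotent
  have hple : ∀ p ∈ lam, p ≤ n :=
    fun p hp => hsum ▸ List.single_le_sum (fun x _ => Nat.zero_le x) p hp
  have hBn : (B ^ n).rank = 0 := by
    rw [hB.2 n]
    apply List.sum_eq_zero
    intro x hx
    simp only [List.mem_map] at hx
    obtain ⟨p, hp, rfl⟩ := hx
    have := hple p hp
    omega
  set fA := A.mulVecLin with hfA
  set fB := B.mulVecLin with hfB
  have hfBn : fB ^ n = 0 := by
    rw [← mulVecLin_pow']
    refine LinearMap.range_eq_bot.mp (Submodule.finrank_eq_zero.mp ?_)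
    exact hBn
  -- the image of A is B-invariant
  have hinv : ∀ x ∈ LinearMap.range fA, fB x ∈ LinearMap.range fA := by
    rintro x ⟨v, rfl⟩
    refine ⟨fB v, ?_⟩
    have : (A * B).mulVecLin v = (B * A).mulVecLin v := by rw [hAB]
    rw [Matrix.mulVecLin_mul, Matrix.mulVecLin_mul] at this
    exact this
  have hW2 : finrank K (LinearMap.range fA) = 2 := by
    rw [← hrA]; rfl
  -- B^2 kills the image of A
  have hg2 : (fB.restrict hinv) ^ 2 = 0 := by
    have hnil : IsNilpotent (fB.restrict hinv) := by
      refine ⟨n, ?_⟩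
      rw [Module.End.pow_restrict]
      refine LinearMap.ext fun x => Subtype.ext ?_
      rw [LinearMap.restrict_coe_apply, hfBn]
      rfl
    have hchar := hnil.charpoly_eq_X_pow_finrank
    have hae := LinearMap.aeval_self_charpoly (fB.restrict hinv)
    rw [hchar, hW2, map_pow, Polynomial.aeval_X] at hae
    exact hae
  set h2 := (B ^ 2).mulVecLin with hh2
  have hh2eq : h2 = fB ^ 2 := mulVecLin_pow' B 2
  have hWker : ∀ v, fA v ∈ LinearMap.ker h2 := by
    intro v
    have hx : fA v ∈ LinearMap.range fA := ⟨v, rfl⟩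
    have h' := Module.End.pow_restrict (f' := fB) 2 hinv
    have happ := congrFun (congrArg DFunLike.coe hg2) ⟨fA v, hx⟩
    rw [h'] at happ
    have := congrArg Subtype.val happ
    simp only [LinearMap.restrict_apply, LinearMap.zero_apply, ZeroMemClass.coe_zero] at this
    rw [LinearMap.mem_ker, hh2eq]
    exact this
  -- dimension count: ker h2 ≤ range h2
  have hd2 : (B ^ 2).rank + 2 * t = n := by
    rw [hB.2 2]
    have := sum_map_sub_add 2 lam (fun x hx => by have := hall4 x hx; omega)
    omega
  have hd4 : (B ^ 4).rank + 4 * t = n := by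
    rw [hB.2 4]
    have := sum_map_sub_add 4 lam (fun x hx => hall4 x hx)
    omega
  have hrn : (B ^ 2).rank + finrank K (LinearMap.ker h2) = n := by
    have := LinearMap.finrank_range_add_finrank_ker h2
    rw [show finrank K (Fin n → K) = n by simp] at this
    exact this
  have hdr : (B ^ 4).rank +
      finrank K ((LinearMap.ker h2 ⊓ LinearMap.range h2 : Submodule K (Fin n → K))) =
      (B ^ 2).rank := by
    have hrn2 := LinearMap.finrank_range_add_finrank_ker (h2.domRestrict (LinearMap.range h2))
    have e1 : LinearMap.range (h2.domRestrict (LinearMap.range h2)) =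
        LinearMap.range (B ^ 4).mulVecLin := by
      rw [LinearMap.range_domRestrict]
      rw [show (B ^ 4) = B ^ 2 * B ^ 2 from by rw [← pow_add], Matrix.mulVecLin_mul, LinearMap.range_comp]
    have e2 : finrank K (LinearMap.ker (h2.domRestrict (LinearMap.range h2))) =
        finrank K ((LinearMap.ker h2 ⊓ LinearMap.range h2 : Submodule K (Fin n → K))) := by
      rw [LinearMap.ker_domRestrict]
      have hmap := Submodule.map_comap_subtype (LinearMap.range h2) (LinearMap.ker h2)
      rw [← Submodule.finrank_map_subtype_eq (LinearMap.range h2)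
        (Submodule.comap (LinearMap.range h2).subtype (LinearMap.ker h2)), hmap, inf_comm]
    rw [e1, e2] at hrn2
    have hfr : finrank K (LinearMap.range h2) = (B ^ 2).rank := rfl
    have hfr4 : finrank K (LinearMap.range (B ^ 4).mulVecLin) = (B ^ 4).rank := rfl
    rw [hfr, hfr4] at hrn2
    exact hrn2
  have hkle : LinearMap.ker h2 ≤ LinearMap.range h2 := by
    have heq : (LinearMap.ker h2 ⊓ LinearMap.range h2 : Submodule K (Fin n → K)) =
        LinearMap.ker h2 :=
      Submodule.eq_of_le_of_finrank_le inf_le_left (by omega)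
    exact inf_eq_left.mp heq
  -- conclude A^2 = 0
  have hA2 : (A ^ 2).mulVecLin = 0 := by
    refine LinearMap.ext fun v => ?_
    have h1 : (A ^ 2).mulVecLin v = fA (fA v) := by
      rw [pow_two, Matrix.mulVecLin_mul]; rfl
    obtain ⟨u, hu⟩ := hkle (hWker v)
    have hcomm2 : A * B ^ 2 = B ^ 2 * A := (Commute.pow_right hAB 2)
    have h3 : fA (h2 u) = h2 (fA u) := by
      have : (A * B ^ 2).mulVecLin u = (B ^ 2 * A).mulVecLin u := by rw [hcomm2]
      rw [Matrix.mulVecLin_mul, Matrix.mulVecLin_mul] at this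
      exact this
    have h4 : h2 (fA u) = 0 := hWker u
    simp only [LinearMap.zero_apply]
    rw [h1, ← hu, h3, h4]
  have hz : (A ^ 2).rank = 0 := by
    have hb : LinearMap.range (A ^ 2).mulVecLin = ⊥ := by rw [hA2, LinearMap.range_zero]
    show finrank K (LinearMap.range (A ^ 2).mulVecLin) = 0
    rw [hb, finrank_bot]
  omega
end

section
/- Let λ be a positive integer and C a nilpotent 2λ × 2λ matrix with Jordan type (λ, λ). Then there exists a nilpotent matrix A commuting with C whose Jordan type is (λ+1, λ−1). -/
open Matrix

section Stmt12Aux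

variable {K : Type*} [Field K] {lam : ℕ}

private lemma stmt12.hCz (C : Matrix (Fin (2 * lam)) (Fin (2 * lam)) K)
    (hC0 : C ^ lam = 0) {m : ℕ} (hm : lam ≤ m) : C ^ m = 0 := by
  have : C ^ m = C ^ lam * C ^ (m - lam) := by
    rw [← pow_add]; congr 1; omega
  rw [this, hC0, zero_mul]

private lemma stmt12.indep_g (C : Matrix (Fin (2 * lam)) (Fin (2 * lam)) K)
    (pre : Fin 2 → Fin (2 * lam) → K) (hC0 : C ^ lam = 0)
    (hy : LinearIndependent K fun x : Fin 2 => (C ^ (lam - 1)) *ᵥ pre x) :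
    LinearIndependent K fun p : Fin 2 × Fin lam => (C ^ ((p.2 : ℕ))) *ᵥ pre p.1 := by
  rw [Fintype.linearIndependent_iff]
  intro cc hcc
  suffices h : ∀ j : ℕ, ∀ p : Fin 2 × Fin lam, (p.2 : ℕ) = j → cc p = 0 by
    intro p; exact h p.2 p rfl
  intro j
  induction j using Nat.strong_induction_on with
  | _ j IH =>
    intro p hpj
    have hjlt : j < lam := hpj ▸ p.2.isLt
    have happ := congrArg ((C ^ (lam - 1 - j)).mulVecLin) hcc
    rw [map_sum, map_zero] at happ
    have hterm0 : ∀ q : Fin 2 × Fin lam,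
        (C ^ (lam - 1 - j)).mulVecLin (cc q • (C ^ ((q.2 : ℕ))) *ᵥ pre q.1)
          = cc q • ((C ^ (lam - 1 - j + (q.2 : ℕ))) *ᵥ pre q.1) := by
      intro q
      rw [LinearMap.map_smul, Matrix.mulVecLin_apply, Matrix.mulVec_mulVec, ← pow_add]
    rw [Finset.sum_congr rfl fun q _ => hterm0 q] at happ
    set jf : Fin lam := ⟨j, hjlt⟩ with hjf
    have hterm : ∀ q : Fin 2 × Fin lam,
        cc q • ((C ^ (lam - 1 - j + (q.2 : ℕ))) *ᵥ pre q.1)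
          = if q.2 = jf then cc (q.1, jf) • ((C ^ (lam - 1)) *ᵥ pre q.1) else 0 := by
      intro q
      rcases lt_trichotomy ((q.2 : ℕ)) j with h | h | h
      · have hcq : cc q = 0 := IH _ h q rfl
        have hne : ¬ (q.2 = jf) := by
          intro he; rw [he] at h; simp [hjf] at h
        simp [hcq, hne]
      · have he : q.2 = jf := Fin.ext (by simp [hjf, h])
        have hq : q = (q.1, jf) := by rw [← he]
        rw [hq, if_pos rfl]
        have hexp2 : lam - 1 - j + ((jf : ℕ)) = lam - 1 := by
          simp only [hjf]
          omega
        rw [hexp2]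
      · have hz : C ^ (lam - 1 - j + (q.2 : ℕ)) = 0 :=
          stmt12.hCz C hC0 (by omega)
        have hne : ¬ (q.2 = jf) := by
          intro he; rw [he] at h; simp [hjf] at h
        simp [hz, hne]
    rw [Finset.sum_congr rfl fun q _ => hterm q] at happ
    rw [Fintype.sum_prod_type] at happ
    have hsum : ∀ x : Fin 2,
        (∑ i : Fin lam, if i = jf then cc (x, jf) • ((C ^ (lam - 1)) *ᵥ pre x) else 0)
          = cc (x, jf) • ((C ^ (lam - 1)) *ᵥ pre x) := by
      intro x
      rw [Finset.sum_ite_eq' Finset.univ jf fun _ => cc (x, jf) • ((C ^ (lam - 1)) *ᵥ pre x)]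
      simp
    rw [Finset.sum_congr rfl fun x _ => hsum x] at happ
    have hz := Fintype.linearIndependent_iff.mp hy (fun x => cc (x, jf)) happ p.1
    have h2f : p.2 = jf := Fin.ext (by simpa [hjf] using hpj)
    have hp : p = (p.1, jf) := by rw [← h2f]
    rw [hp]
    exact hz

private lemma stmt12.fpow0 (C : Matrix (Fin (2 * lam)) (Fin (2 * lam)) K)
    (pre : Fin 2 → Fin (2 * lam) → K)
    (f : (Fin (2 * lam) → K) →ₗ[K] (Fin (2 * lam) → K))
    (hf0 : ∀ j : ℕ, f ((C ^ j) *ᵥ pre 0) = (C ^ (j + 1)) *ᵥ pre 0) :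
    ∀ k j : ℕ, (f ^ k) ((C ^ j) *ᵥ pre 0) = (C ^ (j + k)) *ᵥ pre 0 := by
  intro k
  induction k with
  | zero => intro j; simp
  | succ k ih =>
    intro j
    rw [pow_succ, Module.End.mul_apply, hf0 j, ih (j + 1)]
    have e1 : j + 1 + k = j + (k + 1) := by omega
    rw [e1]

private lemma stmt12.fpow1 (C : Matrix (Fin (2 * lam)) (Fin (2 * lam)) K)
    (pre : Fin 2 → Fin (2 * lam) → K)
    (f : (Fin (2 * lam) → K) →ₗ[K] (Fin (2 * lam) → K))
    (hf0 : ∀ j : ℕ, f ((C ^ j) *ᵥ pre 0) = (C ^ (j + 1)) *ᵥ pre 0)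
    (hf1 : ∀ j : ℕ, f ((C ^ j) *ᵥ pre 1) = (C ^ (j + 1)) *ᵥ pre 1 + (C ^ j) *ᵥ pre 0) :
    ∀ k j : ℕ, (f ^ k) ((C ^ j) *ᵥ pre 1)
      = (C ^ (j + k)) *ᵥ pre 1 + (k : K) • ((C ^ (j + k - 1)) *ᵥ pre 0) := by
  intro k
  induction k with
  | zero => intro j; simp
  | succ k ih =>
    intro j
    rw [pow_succ, Module.End.mul_apply, hf1 j, map_add, ih (j + 1),
      stmt12.fpow0 C pre f hf0 k j]
    have e1 : j + 1 + k = j + (k + 1) := by omega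
    have e3 : j + (k + 1) - 1 = j + k := by omega
    rw [e1, e3, add_assoc]
    congr 1
    push_cast
    rw [add_smul, one_smul]

private lemma stmt12.rank_pow [CharZero K] (hl : 0 < lam)
    (C : Matrix (Fin (2 * lam)) (Fin (2 * lam)) K)
    (pre : Fin 2 → Fin (2 * lam) → K) (hC0 : C ^ lam = 0)
    (hy0 : (C ^ (lam - 1)) *ᵥ pre 0 ≠ 0)
    (b : Module.Basis (Fin 2 × Fin lam) K (Fin (2 * lam) → K))
    (hb : ∀ p : Fin 2 × Fin lam, b p = (C ^ ((p.2 : ℕ))) *ᵥ pre p.1)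
    (f : (Fin (2 * lam) → K) →ₗ[K] (Fin (2 * lam) → K))
    (hf0 : ∀ j : ℕ, f ((C ^ j) *ᵥ pre 0) = (C ^ (j + 1)) *ᵥ pre 0)
    (hf1 : ∀ j : ℕ, f ((C ^ j) *ᵥ pre 1) = (C ^ (j + 1)) *ᵥ pre 1 + (C ^ j) *ᵥ pre 0)
    (k : ℕ) :
    Module.finrank K (LinearMap.range (f ^ k)) = (lam + 1 - k) + (lam - 1 - k) := by
  classical
  have hfin2 : ∀ x : Fin 2, x = 0 ∨ x = 1 := by decide
  have hrange : ∀ k : ℕ, LinearMap.range (f ^ k)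
      = Submodule.span K (Set.range fun p : Fin 2 × Fin lam => (f ^ k) (b p)) := by
    intro k
    rw [LinearMap.range_eq_map, ← b.span_eq, Submodule.map_span, ← Set.range_comp]
    rfl
  rcases Nat.eq_zero_or_pos k with rfl | hk1
  · rw [pow_zero, Module.End.one_eq_id, LinearMap.range_id, finrank_top,
      Module.finrank_fin_fun]
    omega
  rcases lt_or_ge k lam with hklt | hkge
  · -- main case 1 ≤ k < lam
    obtain ⟨m, hm⟩ : ∃ m, lam - k = m := ⟨lam - k, rfl⟩
    have hm1 : 0 < m := by omega
    set nval : Fin 2 × Fin lam → (Fin (2 * lam) → K) := fun p =>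
      if p.1 = 1 ∧ 1 ≤ (p.2 : ℕ) then (C ^ ((p.2 : ℕ) - 1)) *ᵥ pre 0 else 0 with hnval
    set N : (Fin (2 * lam) → K) →ₗ[K] (Fin (2 * lam) → K) := b.constr K nval with hN
    have hNb : ∀ p, N (b p) = nval p := fun p => b.constr_basis K nval p
    have hN2 : ∀ v, N (N v) = 0 := by
      have hNN : (N ∘ₗ N) = (0 : (Fin (2 * lam) → K) →ₗ[K] (Fin (2 * lam) → K)) := by
        apply b.ext
        intro p
        rw [LinearMap.comp_apply, hNb]
        by_cases hp : p.1 = 1 ∧ 1 ≤ (p.2 : ℕ)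
        · rw [hnval]
          simp only [hp, and_self, if_true]
          have hbb : (C ^ ((p.2 : ℕ) - 1)) *ᵥ pre 0
              = b ((0 : Fin 2), ⟨(p.2 : ℕ) - 1, by omega⟩) := by
            rw [hb]
          rw [hbb, hNb, hnval]
          simp
        · rw [hnval]
          simp only [hp, if_false, map_zero, LinearMap.zero_apply]
      intro v
      simpa using LinearMap.congr_fun hNN v
    set T : (Fin (2 * lam) → K) →ₗ[K] (Fin (2 * lam) → K) :=
      LinearMap.id + (k : K) • N with hT
    have hTb : ∀ p, T (b p) = b p + (k : K) • nval p := by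
      intro p
      simp [hT, hNb p]
    have hTinj : Function.Injective T := by
      set T' : (Fin (2 * lam) → K) →ₗ[K] (Fin (2 * lam) → K) :=
        LinearMap.id - (k : K) • N with hT'
      have hleft : ∀ v, T' (T v) = v := by
        intro v
        simp only [hT, hT', LinearMap.sub_apply, LinearMap.add_apply, LinearMap.id_apply,
          LinearMap.smul_apply, map_add, LinearMap.map_smul, hN2, smul_zero, add_zero]
        abel
      intro v w hvw
      have h2 := congrArg (fun w => T' w) hvw
      beta_reduce at h2
      rwa [hleft, hleft] at h2
    set emb : Fin 2 × Fin m → Fin 2 × Fin lam := fun q =>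
      (q.1, ⟨(q.2 : ℕ) + k, by omega⟩) with hembdef
    have hemb : Function.Injective emb := by
      intro q q' h
      have h1 := congrArg Prod.fst h
      have h2 := congrArg Prod.snd h
      simp only [hembdef] at h1 h2
      have h3 : ((q.2 : ℕ)) + k = ((q'.2 : ℕ)) + k := congrArg Fin.val h2
      rw [show q = (q.1, q.2) from rfl, show q' = (q'.1, q'.2) from rfl, h1]
      congr 1
      exact Fin.ext (by omega)
    set u : Fin 2 × Fin m → (Fin (2 * lam) → K) := fun q => T (b (emb q)) with hu
    have hufk : ∀ q : Fin 2 × Fin m,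
        u q = (f ^ k) (b (q.1, ⟨(q.2 : ℕ), by omega⟩)) := by
      intro q
      rw [hu]
      simp only
      rw [hTb, hb, hb, hnval, hembdef]
      simp only
      rcases hfin2 q.1 with hx | hx
      · rw [hx]
        have : ¬ ((0 : Fin 2) = 1 ∧ 1 ≤ (((⟨(q.2 : ℕ) + k, by omega⟩ : Fin lam)) : ℕ)) := by
          simp
        rw [if_neg this]
        rw [stmt12.fpow0 C pre f hf0 k ((q.2 : ℕ))]
        simp
      · rw [hx]
        have hcond : ((1 : Fin 2) = 1 ∧ 1 ≤ (((⟨(q.2 : ℕ) + k, by omega⟩ : Fin lam)) : ℕ)) := by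
          simp; omega
        rw [if_pos hcond]
        rw [stmt12.fpow1 C pre f hf0 hf1 k ((q.2 : ℕ))]
    have hLIcomp : LinearIndependent K (b ∘ emb) := b.linearIndependent.comp emb hemb
    have hLI : LinearIndependent K u :=
      hLIcomp.map' T (LinearMap.ker_eq_bot.mpr hTinj)
    have hspan : Submodule.span K (Set.range fun p : Fin 2 × Fin lam => (f ^ k) (b p))
        = Submodule.span K (Set.range u) := by
      apply le_antisymm
      · rw [Submodule.span_le]
        rintro _ ⟨p, rfl⟩
        show (f ^ k) (b p) ∈ _
        by_cases him : (p.2 : ℕ) < m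
        · have hpe : (f ^ k) (b p) = u (p.1, ⟨(p.2 : ℕ), him⟩) := by
            rw [hufk]
          rw [hpe]
          exact Submodule.subset_span ⟨_, rfl⟩
        · push_neg at him
          rw [hb]
          rcases hfin2 p.1 with hx | hx
          · rw [hx, stmt12.fpow0 C pre f hf0 k ((p.2 : ℕ))]
            rw [stmt12.hCz C hC0 (m := (p.2 : ℕ) + k) (by omega)]
            simp only [Matrix.zero_mulVec]
            exact Submodule.zero_mem _
          · rw [hx, stmt12.fpow1 C pre f hf0 hf1 k ((p.2 : ℕ))]
            rw [stmt12.hCz C hC0 (m := (p.2 : ℕ) + k) (by omega)]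
            simp only [Matrix.zero_mulVec, zero_add]
            rcases Nat.eq_or_lt_of_le him with heq | hlt
            · have hexp : (p.2 : ℕ) + k - 1 = lam - 1 := by omega
              rw [hexp]
              have hu0 : (C ^ (lam - 1)) *ᵥ pre 0 = u ((0 : Fin 2), ⟨m - 1, by omega⟩) := by
                rw [hufk]
                simp only
                rw [hb]
                rw [stmt12.fpow0 C pre f hf0 k]
                simp only [Fin.val_mk]
                have he : m - 1 + k = lam - 1 := by omega
                rw [he]
              rw [hu0]
              exact Submodule.smul_mem _ _ (Submodule.subset_span ⟨_, rfl⟩)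
            · rw [stmt12.hCz C hC0 (m := (p.2 : ℕ) + k - 1) (by omega)]
              simp only [Matrix.zero_mulVec, smul_zero]
              exact Submodule.zero_mem _
      · rw [Submodule.span_le]
        rintro _ ⟨q, rfl⟩
        show u q ∈ _
        rw [hufk]
        exact Submodule.subset_span ⟨_, rfl⟩
    rw [hrange k, hspan, finrank_span_eq_card hLI]
    simp only [Fintype.card_prod, Fintype.card_fin]
    omega
  rcases Nat.eq_or_lt_of_le hkge with rfl | hkgt
  · -- k = lam
    rw [hrange]
    have hspan : Submodule.span K (Set.range fun p : Fin 2 × Fin lam => (f ^ lam) (b p))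
        = Submodule.span K {(C ^ (lam - 1)) *ᵥ pre 0} := by
      apply le_antisymm
      · rw [Submodule.span_le]
        rintro _ ⟨p, rfl⟩
        show (f ^ lam) (b p) ∈ _
        rw [hb]
        rcases hfin2 p.1 with hx | hx
        · rw [hx, stmt12.fpow0 C pre f hf0 lam ((p.2 : ℕ)),
            stmt12.hCz C hC0 (m := (p.2 : ℕ) + lam) (by omega)]
          simp only [Matrix.zero_mulVec]
          exact Submodule.zero_mem _
        · rw [hx, stmt12.fpow1 C pre f hf0 hf1 lam ((p.2 : ℕ)),
            stmt12.hCz C hC0 (m := (p.2 : ℕ) + lam) (by omega)]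
          simp only [Matrix.zero_mulVec, zero_add]
          rcases Nat.eq_zero_or_pos ((p.2 : ℕ)) with h0 | h0
          · have hexp : (p.2 : ℕ) + lam - 1 = lam - 1 := by omega
            rw [hexp]
            exact Submodule.smul_mem _ _ (Submodule.subset_span rfl)
          · rw [stmt12.hCz C hC0 (m := (p.2 : ℕ) + lam - 1) (by omega)]
            simp only [Matrix.zero_mulVec, smul_zero]
            exact Submodule.zero_mem _
      · rw [Submodule.span_le, Set.singleton_subset_iff]
        have hlam0 : ((lam : K)) ≠ 0 := Nat.cast_ne_zero.mpr hl.ne'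
        have hval : (f ^ lam) (b ((1 : Fin 2), ⟨0, hl⟩)) = (lam : K) • ((C ^ (lam - 1)) *ᵥ pre 0) := by
          rw [hb]
          simp only
          rw [stmt12.fpow1 C pre f hf0 hf1 lam]
          simp [hC0]
        have hmem : (lam : K) • ((C ^ (lam - 1)) *ᵥ pre 0)
            ∈ Submodule.span K (Set.range fun p : Fin 2 × Fin lam => (f ^ lam) (b p)) := by
          rw [← hval]
          exact Submodule.subset_span ⟨_, rfl⟩
        have := Submodule.smul_mem _ ((lam : K))⁻¹ hmem
        rwa [smul_smul, inv_mul_cancel₀ hlam0, one_smul] at this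
    rw [hspan]
    have h1 : Module.finrank K (Submodule.span K {(C ^ (lam - 1)) *ᵥ pre 0}) = 1 := by
      rw [finrank_span_singleton hy0]
    rw [h1]
    omega
  · -- k > lam
    have hfz : f ^ (lam + 1) = 0 := by
      apply b.ext
      intro p
      rw [hb]
      simp only [LinearMap.zero_apply]
      rcases hfin2 p.1 with hx | hx
      · rw [hx, stmt12.fpow0 C pre f hf0 (lam + 1) ((p.2 : ℕ)),
          stmt12.hCz C hC0 (m := (p.2 : ℕ) + (lam + 1)) (by omega)]
        simp
      · rw [hx, stmt12.fpow1 C pre f hf0 hf1 (lam + 1) ((p.2 : ℕ)),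
          stmt12.hCz C hC0 (m := (p.2 : ℕ) + (lam + 1)) (by omega),
          stmt12.hCz C hC0 (m := (p.2 : ℕ) + (lam + 1) - 1) (by omega)]
        simp
    have hfk : f ^ k = 0 := by
      have : f ^ k = f ^ (lam + 1) * f ^ (k - (lam + 1)) := by
        rw [← pow_add]; congr 1; omega
      rw [this, hfz, zero_mul]
    rw [hfk, LinearMap.range_zero, finrank_bot]
    omega

end Stmt12Aux

/-- If `C` has Jordan type `(λ, λ)`, then some nilpotent matrix commuting with `C`
has Jordan type `(λ+1, λ-1)`. -/
theorem stmt12 {K : Type*} [Field K] [IsAlgClosed K] [CharZero K]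
    (lam : ℕ) (hl : 0 < lam)
    (C : Matrix (Fin (2 * lam)) (Fin (2 * lam)) K) (hC : HasJordanType C [lam, lam]) :
    ∃ A : Matrix (Fin (2 * lam)) (Fin (2 * lam)) K, A * C = C * A ∧
      HasJordanType A (if lam = 1 then [lam + 1] else [lam + 1, lam - 1]) := by
  classical
  obtain ⟨-, hrank⟩ := hC
  -- C ^ lam = 0
  have hC0 : C ^ lam = 0 := by
    have h0 : (C ^ lam).rank = 0 := by
      have := hrank lam
      simpa using this
    have hr0 : Module.finrank K (LinearMap.range (C ^ lam).mulVecLin) = 0 := h0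
    have hbot : LinearMap.range (C ^ lam).mulVecLin = ⊥ :=
      Submodule.finrank_eq_zero.mp hr0
    have hml : (C ^ lam).mulVecLin = 0 := LinearMap.range_eq_bot.mp hbot
    have : Matrix.toLin' (C ^ lam) = Matrix.toLin' (0 : Matrix (Fin (2 * lam)) (Fin (2 * lam)) K) := by
      rw [Matrix.toLin'_apply', Matrix.toLin'_apply', hml, Matrix.mulVecLin_zero]
    exact Matrix.toLin'.injective this
  -- rank of C ^ (lam - 1) is 2
  have h2 : Module.finrank K (LinearMap.range (C ^ (lam - 1)).mulVecLin) = 2 := by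
    have := hrank (lam - 1)
    have hsum : (([lam, lam].map fun p => p - (lam - 1)).sum) = 2 := by
      simp; omega
    rw [hsum] at this
    exact this
  -- pick preimages of a basis of the range
  have hfd : FiniteDimensional K (LinearMap.range (C ^ (lam - 1)).mulVecLin) :=
    inferInstance
  let B2 : Module.Basis (Fin 2) K (LinearMap.range (C ^ (lam - 1)).mulVecLin) :=
    Module.finBasisOfFinrankEq K _ h2
  have hyB : LinearIndependent K fun x : Fin 2 => ((B2 x : Fin (2 * lam) → K)) :=
    B2.linearIndependent.map' (Submodule.subtype _) (Submodule.ker_subtype _)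
  have hex : ∀ x : Fin 2, ∃ v, (C ^ (lam - 1)) *ᵥ v = (B2 x : Fin (2 * lam) → K) := by
    intro x
    obtain ⟨v, hv⟩ := (B2 x).2
    exact ⟨v, hv⟩
  set pre : Fin 2 → Fin (2 * lam) → K := fun x => (hex x).choose with hpre
  have hprespec : ∀ x : Fin 2, (C ^ (lam - 1)) *ᵥ pre x = (B2 x : Fin (2 * lam) → K) :=
    fun x => (hex x).choose_spec
  have hy : LinearIndependent K fun x : Fin 2 => (C ^ (lam - 1)) *ᵥ pre x := by
    have : (fun x : Fin 2 => (C ^ (lam - 1)) *ᵥ pre x)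
        = fun x : Fin 2 => ((B2 x : Fin (2 * lam) → K)) := funext hprespec
    rw [this]
    exact hyB
  have hy0 : (C ^ (lam - 1)) *ᵥ pre 0 ≠ 0 := hy.ne_zero 0
  -- basis from the independent family
  have hindep := stmt12.indep_g C pre hC0 hy
  haveI : Nonempty (Fin lam) := ⟨⟨0, hl⟩⟩
  have hcard : Fintype.card (Fin 2 × Fin lam) = Module.finrank K (Fin (2 * lam) → K) := by
    simp [Module.finrank_fin_fun]
  let b : Module.Basis (Fin 2 × Fin lam) K (Fin (2 * lam) → K) :=
    basisOfLinearIndependentOfCardEqFinrank hindep hcard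
  have hb : ∀ p : Fin 2 × Fin lam, b p = (C ^ ((p.2 : ℕ))) *ᵥ pre p.1 := by
    intro p
    rw [show b p = _ from congrFun (coe_basisOfLinearIndependentOfCardEqFinrank hindep hcard) p]
  -- the commuting endomorphism
  set tgt : Fin 2 × Fin lam → (Fin (2 * lam) → K) := fun p =>
    if p.1 = 0 then (C ^ ((p.2 : ℕ) + 1)) *ᵥ pre 0
    else (C ^ ((p.2 : ℕ) + 1)) *ᵥ pre 1 + (C ^ ((p.2 : ℕ))) *ᵥ pre 0 with htgt
  set f : (Fin (2 * lam) → K) →ₗ[K] (Fin (2 * lam) → K) := b.constr K tgt with hfdef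
  have hfb : ∀ p, f (b p) = tgt p := fun p => b.constr_basis K tgt p
  have hCzz : ∀ m : ℕ, lam ≤ m → C ^ m = 0 := fun m hm => stmt12.hCz C hC0 hm
  have hf0 : ∀ j : ℕ, f ((C ^ j) *ᵥ pre 0) = (C ^ (j + 1)) *ᵥ pre 0 := by
    intro j
    rcases lt_or_ge j lam with hj | hj
    · have : (C ^ j) *ᵥ pre 0 = b ((0 : Fin 2), ⟨j, hj⟩) := by rw [hb]
      rw [this, hfb, htgt]
      simp
    · rw [hCzz j hj, hCzz (j + 1) (by omega)]
      simp
  have hf1 : ∀ j : ℕ, f ((C ^ j) *ᵥ pre 1) = (C ^ (j + 1)) *ᵥ pre 1 + (C ^ j) *ᵥ pre 0 := by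
    intro j
    rcases lt_or_ge j lam with hj | hj
    · have : (C ^ j) *ᵥ pre 1 = b ((1 : Fin 2), ⟨j, hj⟩) := by rw [hb]
      rw [this, hfb, htgt]
      simp
    · rw [hCzz j hj, hCzz (j + 1) (by omega)]
      simp
  -- the matrix A
  refine ⟨LinearMap.toMatrix' f, ?_, ?_, ?_⟩
  · -- commutation
    have hcomm : f ∘ₗ Matrix.toLin' C = Matrix.toLin' C ∘ₗ f := by
      apply b.ext
      intro p
      rw [LinearMap.comp_apply, LinearMap.comp_apply, hb]
      have hstep : Matrix.toLin' C ((C ^ ((p.2 : ℕ))) *ᵥ pre p.1)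
          = (C ^ ((p.2 : ℕ) + 1)) *ᵥ pre p.1 := by
        rw [Matrix.toLin'_apply, Matrix.mulVec_mulVec, ← pow_succ']
      rw [hstep]
      have hfin2 : ∀ x : Fin 2, x = 0 ∨ x = 1 := by decide
      rcases hfin2 p.1 with hx | hx
      · rw [hx, hf0, hf0, Matrix.toLin'_apply, Matrix.mulVec_mulVec, ← pow_succ']
      · rw [hx, hf1, hf1, Matrix.toLin'_apply, Matrix.mulVec_add,
          Matrix.mulVec_mulVec, Matrix.mulVec_mulVec, ← pow_succ', ← pow_succ']
    calc LinearMap.toMatrix' f * C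
        = LinearMap.toMatrix' f * LinearMap.toMatrix' (Matrix.toLin' C) := by
          rw [LinearMap.toMatrix'_toLin']
      _ = LinearMap.toMatrix' (f ∘ₗ Matrix.toLin' C) := by rw [LinearMap.toMatrix'_comp]
      _ = LinearMap.toMatrix' (Matrix.toLin' C ∘ₗ f) := by rw [hcomm]
      _ = LinearMap.toMatrix' (Matrix.toLin' C) * LinearMap.toMatrix' f := by
          rw [LinearMap.toMatrix'_comp]
      _ = C * LinearMap.toMatrix' f := by rw [LinearMap.toMatrix'_toLin']
  · -- partition
    by_cases h1 : lam = 1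
    · subst h1
      simp only [if_pos rfl]
      refine ⟨List.pairwise_singleton _ _, ?_, by simp⟩
      intro x hx
      simp at hx
      omega
    · rw [if_neg h1]
      refine ⟨?_, ?_, ?_⟩
      · refine List.pairwise_cons.mpr ⟨?_, List.pairwise_singleton _ _⟩
        intro b hb'
        simp at hb'
        omega
      · intro x hx
        simp at hx
        rcases hx with rfl | rfl <;> omega
      · simp
        omega
  · -- ranks
    intro i
    have hApow : (LinearMap.toMatrix' f) ^ i = LinearMap.toMatrix' (f ^ i) := by
      induction i with
      | zero => simp [LinearMap.toMatrix'_id]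
      | succ n ih =>
        rw [pow_succ, pow_succ, ih, Module.End.mul_eq_comp, LinearMap.toMatrix'_comp]
    have hml : (LinearMap.toMatrix' (f ^ i)).mulVecLin = f ^ i := by
      rw [← Matrix.toLin'_apply', Matrix.toLin'_toMatrix']
    have hrk : (LinearMap.toMatrix' (f ^ i)).rank
        = Module.finrank K (LinearMap.range (f ^ i)) := by
      rw [Matrix.rank, hml]
    rw [hApow, hrk,
      stmt12.rank_pow hl C pre hC0 hy0 b hb f hf0 hf1 i]
    by_cases h1 : lam = 1
    · subst h1
      simp only [if_pos rfl]
      simp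
    · rw [if_neg h1]
      simp
end

section
/- Let B be a nilpotent 2λ × 2λ matrix with Jordan type (λ, λ) and A a nilpotent matrix commuting with B with Jordan type μ = (μ₁, ..., μ_s). Then either μ = (2λ) (a single part) or μ₁ ≤ λ + 1. -/
open Matrix

open Matrix Polynomial

namespace Stmt15Aux

variable {K : Type*} [Field K]

lemma pow_stab {n lam m : ℕ} (B : Matrix (Fin n) (Fin n) K) (hB0 : B ^ lam = 0)
    (hm : lam ≤ m) : B ^ m = 0 := by
  rw [← Nat.sub_add_cancel hm, pow_add, hB0, Matrix.mul_zero]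

lemma sum_mulVec {n : ℕ} {ι : Type*} (s : Finset ι) (M : ι → Matrix (Fin n) (Fin n) K)
    (w : Fin n → K) : (∑ i ∈ s, M i) *ᵥ w = ∑ i ∈ s, (M i) *ᵥ w := by
  induction s using Finset.cons_induction with
  | empty => simp
  | cons a s ha ih => simp [Finset.sum_cons, Matrix.add_mulVec, ih]

lemma aeval_trunc {n lam : ℕ} (B : Matrix (Fin n) (Fin n) K) (hB0 : B ^ lam = 0)
    (p : K[X]) :
    Polynomial.aeval B p = ∑ i : Fin lam, p.coeff (i : ℕ) • B ^ (i : ℕ) := by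
  have hdeg : p.natDegree < max (p.natDegree + 1) lam := lt_of_lt_of_le (Nat.lt_succ_self _)
    (le_max_left _ _)
  rw [Polynomial.aeval_eq_sum_range' hdeg]
  rw [Fin.sum_univ_eq_sum_range (fun i => p.coeff i • B ^ i) lam]
  apply (Finset.sum_subset _ _).symm
  · exact Finset.range_subset_range.mpr (le_max_right _ _)
  · intro x _ hx
    rw [Finset.mem_range, not_lt] at hx
    rw [pow_stab B hB0 hx, smul_zero]

lemma aeval_kill {n lam : ℕ} (B : Matrix (Fin n) (Fin n) K) (hB0 : B ^ lam = 0)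
    (p : K[X]) (hp : X ^ lam ∣ p) : Polynomial.aeval B p = 0 := by
  obtain ⟨r, rfl⟩ := hp
  rw [_root_.map_mul, map_pow, Polynomial.aeval_X, hB0, Matrix.zero_mul]

lemma commute_aeval {n : ℕ} (A B : Matrix (Fin n) (Fin n) K) (hc : A * B = B * A)
    (p : K[X]) : Commute A (Polynomial.aeval B p) := by
  have hAB : Commute A B := hc
  induction p using Polynomial.induction_on' with
  | add p q hp hq => rw [map_add]; exact hp.add_right hq
  | monomial m a =>
      rw [Polynomial.aeval_monomial]
      exact Commute.mul_right (Algebra.commute_algebraMap_left a A).symm (hAB.pow_right m)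

lemma rank_zero_iff {m : ℕ} (M : Matrix (Fin m) (Fin m) K) : M.rank = 0 ↔ M = 0 := by
  constructor
  · intro h
    have h2 : LinearMap.range M.mulVecLin = ⊥ := Submodule.finrank_eq_zero.mp h
    rw [LinearMap.range_eq_bot] at h2
    apply Matrix.toLin'.injective
    rw [Matrix.toLin'_apply', h2, map_zero]
  · intro h; rw [h, Matrix.rank_zero]

/-- coefficients of powers: `A ^ N = (jseq t d N).1 • 1 + (jseq t d N).2 • A` formally. -/
noncomputable def jseq (t d : K[X]) : ℕ → K[X] × K[X]
  | 0 => (1, 0)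
  | N + 1 => (-(d * (jseq t d N).2), (jseq t d N).1 + t * (jseq t d N).2)

lemma crux (lam : ℕ) (hl : 0 < lam)
    (A B : Matrix (Fin (2 * lam)) (Fin (2 * lam)) K)
    (hc : A * B = B * A)
    (hB0 : B ^ lam = 0) (hBr : (B ^ (lam - 1)).rank = 2)
    (hA0 : A ^ (2 * lam) = 0) (h1 : A ^ (lam + 1) ≠ 0) :
    A ^ (2 * lam - 1) ≠ 0 := by
  classical
  have hAB : Commute A B := hc
  -- ## choose generators e 0, e 1
  haveI : Module.Finite K ↥(LinearMap.range (B ^ (lam - 1)).mulVecLin) := by infer_instance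
  let fb : Module.Basis (Fin 2) K ↥(LinearMap.range (B ^ (lam - 1)).mulVecLin) :=
    Module.finBasisOfFinrankEq K _ hBr
  set u : Fin 2 → (Fin (2 * lam) → K) := fun j => (fb j : Fin (2 * lam) → K) with hu_def
  have hu : LinearIndependent K u :=
    fb.linearIndependent.map' (Submodule.subtype _) (Submodule.ker_subtype _)
  have he : ∀ j : Fin 2, ∃ x, (B ^ (lam - 1)) *ᵥ x = u j := by
    intro j
    obtain ⟨x, hx⟩ := (fb j).2
    exact ⟨x, by rw [← Matrix.mulVecLin_apply]; exact hx⟩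
  choose e he using he
  -- ## the family v is linearly independent
  set v : Fin lam × Fin 2 → (Fin (2 * lam) → K) :=
    fun ij => (B ^ (ij.1 : ℕ)) *ᵥ e ij.2 with hv_def
  have hvli : LinearIndependent K v := by
    rw [Fintype.linearIndependent_iff]
    intro g hg
    have key : ∀ i : ℕ, ∀ hi : i < lam, ∀ j, g (⟨i, hi⟩, j) = 0 := by
      intro i
      induction i using Nat.strong_induction_on with
      | _ i IH =>
        intro hi j
        have h2 : ∑ ij : Fin lam × Fin 2,
            g ij • ((B ^ (lam - 1 - i + (ij.1 : ℕ))) *ᵥ e ij.2) = 0 := by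
          have h3 : (B ^ (lam - 1 - i)).mulVecLin (∑ ij : Fin lam × Fin 2, g ij • v ij) = 0 := by
            rw [hg, map_zero]
          rw [map_sum] at h3
          rw [← h3]
          apply Finset.sum_congr rfl
          intro ij _
          simp only [_root_.map_smul, Matrix.mulVecLin_apply, hv_def, Matrix.mulVec_mulVec,
            ← pow_add]
        have h4 : ∀ ij : Fin lam × Fin 2,
            g ij • ((B ^ (lam - 1 - i + (ij.1 : ℕ))) *ᵥ e ij.2)
              = if ij.1 = (⟨i, hi⟩ : Fin lam) then g ij • u ij.2 else 0 := by
          rintro ⟨i', j'⟩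
          rcases lt_trichotomy (i' : ℕ) i with hlt | heq | hgt
          · have : g (i', j') = 0 := by
              have := IH (i' : ℕ) hlt i'.isLt j'
              simpa using this
            simp [this]
          · have hif : i' = (⟨i, hi⟩ : Fin lam) := by ext; exact heq
            have hexp : lam - 1 - i + i = lam - 1 := by omega
            simp only [hif, if_pos]
            rw [hexp, he]
          · have hexp : lam ≤ lam - 1 - i + (i' : ℕ) := by omega
            have hif : ¬ (i' = (⟨i, hi⟩ : Fin lam)) := by
              intro h
              rw [Fin.ext_iff] at h
              simp only [] at h
              omega
            rw [pow_stab B hB0 hexp, if_neg hif, Matrix.zero_mulVec, smul_zero]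
        rw [Finset.sum_congr rfl (fun ij _ => h4 ij)] at h2
        rw [Fintype.sum_prod_type] at h2
        rw [Finset.sum_eq_single (⟨i, hi⟩ : Fin lam)] at h2
        · simp only [if_pos rfl] at h2
          exact Fintype.linearIndependent_iff.mp hu (fun j => g (⟨i, hi⟩, j)) h2 j
        · intro b _ hb
          simp [if_neg hb]
        · intro h; exact absurd (Finset.mem_univ _) h
    rintro ⟨i, j⟩
    have := key (i : ℕ) i.isLt j
    simpa using this
  -- ## basis
  haveI : Nonempty (Fin lam) := ⟨⟨0, hl⟩⟩
  have hcard : Fintype.card (Fin lam × Fin 2) = Module.finrank K (Fin (2 * lam) → K) := by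
    simp [Module.finrank_fin_fun]
    omega
  let bas : Module.Basis (Fin lam × Fin 2) K (Fin (2 * lam) → K) :=
    basisOfLinearIndependentOfCardEqFinrank hvli hcard
  have hbas : ⇑bas = v := coe_basisOfLinearIndependentOfCardEqFinrank _ _
  -- ## two polynomial evaluation helpers
  have hpoly : ∀ (c : Fin lam → K) (j : Fin 2),
      (Polynomial.aeval B (∑ i : Fin lam, Polynomial.C (c i) * X ^ (i : ℕ))) *ᵥ e j
        = ∑ i : Fin lam, c i • v (i, j) := by
    intro c j
    rw [map_sum, sum_mulVec]
    apply Finset.sum_congr rfl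
    intro i _
    rw [_root_.map_mul, Polynomial.aeval_C, map_pow, Polynomial.aeval_X, ← Algebra.smul_def,
      Matrix.smul_mulVec]
  have hpoly2 : ∀ (p : K[X]) (j : Fin 2),
      (Polynomial.aeval B p) *ᵥ e j = ∑ i : Fin lam, p.coeff (i : ℕ) • v (i, j) := by
    intro p j
    rw [aeval_trunc B hB0, sum_mulVec]
    apply Finset.sum_congr rfl
    intro i _
    rw [Matrix.smul_mulVec]
  -- ## representation of vectors
  have hrepr : ∀ x : Fin (2 * lam) → K, ∃ p q : K[X],
      x = (Polynomial.aeval B p) *ᵥ e 0 + (Polynomial.aeval B q) *ᵥ e 1 := by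
    intro x
    refine ⟨∑ i : Fin lam, Polynomial.C (bas.repr x (i, 0)) * X ^ (i : ℕ),
            ∑ i : Fin lam, Polynomial.C (bas.repr x (i, 1)) * X ^ (i : ℕ), ?_⟩
    rw [hpoly, hpoly]
    have hx := bas.sum_repr x
    conv_lhs => rw [← hx]
    rw [hbas, Fintype.sum_prod_type_right, Fin.sum_univ_two]
  obtain ⟨al, ga, hal⟩ := hrepr (A *ᵥ e 0)
  obtain ⟨be, de, hbe⟩ := hrepr (A *ᵥ e 1)
  set L : K[X] → K[X] → (Fin (2 * lam) → K) :=
    fun p q => (Polynomial.aeval B p) *ᵥ e 0 + (Polynomial.aeval B q) *ᵥ e 1 with hL_def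
  have hcomm : ∀ (p : K[X]) (x : Fin (2 * lam) → K),
      A *ᵥ ((Polynomial.aeval B p) *ᵥ x) = (Polynomial.aeval B p) *ᵥ (A *ᵥ x) := by
    intro p x
    rw [Matrix.mulVec_mulVec, Matrix.mulVec_mulVec, (commute_aeval A B hc p).eq]
  have hLmul : ∀ p q r : K[X], (Polynomial.aeval B p) *ᵥ L q r = L (p * q) (p * r) := by
    intro p q r
    rw [hL_def]
    simp only [Matrix.mulVec_add, Matrix.mulVec_mulVec, ← _root_.map_mul]
  have hLadd : ∀ p q p' q' : K[X], L p q + L p' q' = L (p + p') (q + q') := by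
    intro p q p' q'
    rw [hL_def]
    simp only [map_add, Matrix.add_mulVec]
    abel
  have hAL : ∀ p q : K[X], A *ᵥ L p q = L (p * al + q * be) (p * ga + q * de) := by
    intro p q
    rw [hL_def]
    simp only [Matrix.mulVec_add]
    rw [hcomm, hcomm, hal, hbe]
    rw [show (Polynomial.aeval B al) *ᵥ e 0 + (Polynomial.aeval B ga) *ᵥ e 1 = L al ga from rfl]
    rw [show (Polynomial.aeval B be) *ᵥ e 0 + (Polynomial.aeval B de) *ᵥ e 1 = L be de from rfl]
    rw [hLmul, hLmul, hLadd]
  -- ## powers of A on the generators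
  have hpow : ∀ N : ℕ,
      (A ^ N) *ᵥ e 0 = L ((jseq (al + de) (al * de - be * ga) N).1
          + (jseq (al + de) (al * de - be * ga) N).2 * al)
          ((jseq (al + de) (al * de - be * ga) N).2 * ga)
      ∧ (A ^ N) *ᵥ e 1 = L ((jseq (al + de) (al * de - be * ga) N).2 * be)
          ((jseq (al + de) (al * de - be * ga) N).1
          + (jseq (al + de) (al * de - be * ga) N).2 * de) := by
    intro N
    induction N with
    | zero =>
        constructor
        · rw [show (jseq (al + de) (al * de - be * ga) 0) = (1, 0) from rfl]
          rw [pow_zero, Matrix.one_mulVec]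
          rw [show ((1:K[X]), (0:K[X])).1 + ((1:K[X]), (0:K[X])).2 * al = 1 from by simp]
          rw [show ((1:K[X]), (0:K[X])).2 * ga = 0 from by simp]
          rw [hL_def]
          simp [Matrix.one_mulVec, Matrix.zero_mulVec]
        · rw [show (jseq (al + de) (al * de - be * ga) 0) = (1, 0) from rfl]
          rw [pow_zero, Matrix.one_mulVec]
          rw [show ((1:K[X]), (0:K[X])).2 * be = 0 from by simp]
          rw [show ((1:K[X]), (0:K[X])).1 + ((1:K[X]), (0:K[X])).2 * de = 1 from by simp]
          rw [hL_def]
          simp [Matrix.one_mulVec, Matrix.zero_mulVec]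
    | succ N IH =>
        have h0 : ∀ x : Fin (2 * lam) → K, (A ^ (N + 1)) *ᵥ x = A *ᵥ ((A ^ N) *ᵥ x) := by
          intro x
          rw [Matrix.mulVec_mulVec, ← pow_succ']
        constructor
        · rw [h0, IH.1, hAL]
          rw [show ((jseq (al + de) (al * de - be * ga) N).1 + (jseq (al + de) (al * de - be * ga) N).2 * al) * al + ((jseq (al + de) (al * de - be * ga) N).2 * ga) * be
              = (jseq (al + de) (al * de - be * ga) (N+1)).1 + (jseq (al + de) (al * de - be * ga) (N+1)).2 * al from by simp only [jseq]; ring]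
          rw [show ((jseq (al + de) (al * de - be * ga) N).1 + (jseq (al + de) (al * de - be * ga) N).2 * al) * ga + ((jseq (al + de) (al * de - be * ga) N).2 * ga) * de
              = (jseq (al + de) (al * de - be * ga) (N+1)).2 * ga from by simp only [jseq]; ring]
        · rw [h0, IH.2, hAL]
          rw [show ((jseq (al + de) (al * de - be * ga) N).2 * be) * al + ((jseq (al + de) (al * de - be * ga) N).1 + (jseq (al + de) (al * de - be * ga) N).2 * de) * be
              = (jseq (al + de) (al * de - be * ga) (N+1)).2 * be from by simp only [jseq]; ring]
          rw [show ((jseq (al + de) (al * de - be * ga) N).2 * be) * ga + ((jseq (al + de) (al * de - be * ga) N).1 + (jseq (al + de) (al * de - be * ga) N).2 * de) * de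
              = (jseq (al + de) (al * de - be * ga) (N+1)).1 + (jseq (al + de) (al * de - be * ga) (N+1)).2 * de from by simp only [jseq]; ring]
  -- ## extraction of coefficients
  have hext : ∀ p q : K[X], L p q = 0 → X ^ lam ∣ p ∧ X ^ lam ∣ q := by
    intro p q h
    have hsum : ∑ ij : Fin lam × Fin 2,
        (if ij.2 = 0 then p.coeff (ij.1 : ℕ) else q.coeff (ij.1 : ℕ)) • v ij = 0 := by
      rw [Fintype.sum_prod_type_right, Fin.sum_univ_two]
      have e0 : ∀ i : Fin lam,
          (if (0 : Fin 2) = 0 then p.coeff (i : ℕ) else q.coeff (i : ℕ)) • v (i, 0)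
            = p.coeff (i : ℕ) • v (i, 0) := by intro i; rw [if_pos rfl]
      have e1 : ∀ i : Fin lam,
          (if (1 : Fin 2) = 0 then p.coeff (i : ℕ) else q.coeff (i : ℕ)) • v (i, 1)
            = q.coeff (i : ℕ) • v (i, 1) := by intro i; rw [if_neg (by decide)]
      rw [Finset.sum_congr rfl (fun i _ => e0 i), Finset.sum_congr rfl (fun i _ => e1 i)]
      rw [← hpoly2, ← hpoly2]
      exact h
    have hcoef := Fintype.linearIndependent_iff.mp hvli _ hsum
    constructor
    · rw [Polynomial.X_pow_dvd_iff]
      intro dl hdl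
      have := hcoef (⟨dl, hdl⟩, 0)
      simpa using this
    · rw [Polynomial.X_pow_dvd_iff]
      intro dl hdl
      have := hcoef (⟨dl, hdl⟩, 1)
      simpa using this
  -- ## killing lemma
  have hkill : ∀ p q : K[X], X ^ lam ∣ p → X ^ lam ∣ q → L p q = 0 := by
    intro p q hp hq
    rw [hL_def]
    simp only [aeval_kill B hB0 p hp, aeval_kill B hB0 q hq, Matrix.zero_mulVec, add_zero]
  -- ## a matrix commuting with B and killing the generators is zero
  have hzero : ∀ M : Matrix (Fin (2 * lam)) (Fin (2 * lam)) K, Commute M B →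
      M *ᵥ e 0 = 0 → M *ᵥ e 1 = 0 → M = 0 := by
    intro M hcm h0 h1'
    have hMe : ∀ j : Fin 2, M *ᵥ e j = 0 := by
      intro j
      fin_cases j
      · exact h0
      · exact h1'
    have hv0 : ∀ ij : Fin lam × Fin 2, M *ᵥ v ij = 0 := by
      rintro ⟨i, j⟩
      have hsw : M *ᵥ ((B ^ (i : ℕ)) *ᵥ e j) = (B ^ (i : ℕ)) *ᵥ (M *ᵥ e j) := by
        rw [Matrix.mulVec_mulVec, Matrix.mulVec_mulVec, (hcm.pow_right (i : ℕ)).eq]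
      rw [hv_def]
      simp only [hsw, hMe j, Matrix.mulVec_zero]
    have hlin : Matrix.toLin' M = (0 : (Fin (2 * lam) → K) →ₗ[K] (Fin (2 * lam) → K)) := by
      apply Module.Basis.ext bas
      intro ij
      rw [Matrix.toLin'_apply]
      rw [show bas ij = v ij from by rw [hbas]]
      rw [hv0 ij]
      simp
    ext i j
    have hz := congrFun (show M *ᵥ Pi.single j 1 = 0 from by
      rw [← Matrix.toLin'_apply, hlin]; rfl) i
    rw [Matrix.mulVec_single_one] at hz
    simpa using hz
  -- ## scalar sequences
  have hEv : ∀ f : K[X], X ^ lam ∣ f → f.eval 0 = 0 := by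
    intro f hf
    have hXf : X ∣ f := dvd_trans (dvd_pow_self X hl.ne') hf
    rw [Polynomial.X_dvd_iff, Polynomial.coeff_zero_eq_eval_zero] at hXf
    exact hXf
  have hzeroN : ∀ N, 2 * lam ≤ N → A ^ N = 0 := fun N h => pow_stab A hA0 h
  have hconN : ∀ N, 2 * lam ≤ N →
      (X ^ lam ∣ (jseq (al + de) (al * de - be * ga) N).1 + (jseq (al + de) (al * de - be * ga) N).2 * al) ∧ (X ^ lam ∣ (jseq (al + de) (al * de - be * ga) N).2 * ga)
      ∧ (X ^ lam ∣ (jseq (al + de) (al * de - be * ga) N).2 * be) ∧ (X ^ lam ∣ (jseq (al + de) (al * de - be * ga) N).1 + (jseq (al + de) (al * de - be * ga) N).2 * de) := by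
    intro N h
    have h0 := (hpow N).1
    have h1' := (hpow N).2
    rw [hzeroN N h, Matrix.zero_mulVec] at h0 h1'
    obtain ⟨d1, d2⟩ := hext _ _ h0.symm
    obtain ⟨d3, d4⟩ := hext _ _ h1'.symm
    exact ⟨d1, d2, d3, d4⟩
  set sa : ℕ → K := fun N => ((jseq (al + de) (al * de - be * ga) N).1).eval 0 with hsa_def
  set sb : ℕ → K := fun N => ((jseq (al + de) (al * de - be * ga) N).2).eval 0 with hsb_def
  set a0 : K := al.eval 0 with ha0_def
  set be0 : K := be.eval 0 with hbe0_def
  set ga0 : K := ga.eval 0 with hga0_def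
  set de0 : K := de.eval 0 with hde0_def
  have hsa0 : sa 0 = 1 := by simp [hsa_def, jseq]
  have hsb0 : sb 0 = 0 := by simp [hsb_def, jseq]
  have hrecA : ∀ N, sa (N + 1) = -((a0 * de0 - be0 * ga0) * sb N) := by
    intro N
    rw [hsa_def, hsb_def]
    show ((jseq (al + de) (al * de - be * ga) (N+1)).1).eval 0 = _
    simp only [jseq]
    simp [ha0_def, hbe0_def, hga0_def, hde0_def]
    try ring
  have hrecB : ∀ N, sb (N + 1) = sa N + (a0 + de0) * sb N := by
    intro N
    rw [hsa_def, hsb_def]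
    show ((jseq (al + de) (al * de - be * ga) (N+1)).2).eval 0 = _
    simp only [jseq]
    simp [ha0_def, hde0_def]
    try ring
  have hscon : ∀ N, 2 * lam ≤ N →
      (sa N + sb N * a0 = 0) ∧ (sb N * ga0 = 0) ∧ (sb N * be0 = 0)
        ∧ (sa N + sb N * de0 = 0) := by
    intro N h
    obtain ⟨d1, d2, d3, d4⟩ := hconN N h
    refine ⟨?_, ?_, ?_, ?_⟩
    · have := hEv _ d1; simpa [hsa_def, hsb_def, ha0_def] using this
    · have := hEv _ d2; simpa [hsb_def, hga0_def] using this
    · have := hEv _ d3; simpa [hsb_def, hbe0_def] using this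
    · have := hEv _ d4; simpa [hsa_def, hsb_def, hde0_def] using this
  -- ## d0 = 0
  have hd0 : a0 * de0 - be0 * ga0 = 0 := by
    by_contra hd0
    have hpair : ∀ N, ¬ (sb N = 0 ∧ sb (N + 1) = 0) := by
      intro N
      induction N with
      | zero =>
          rintro ⟨_, hb1⟩
          rw [hrecB 0, hsa0, hsb0] at hb1
          simp at hb1
      | succ N IH =>
          rintro ⟨hb1, hb2⟩
          apply IH
          refine ⟨?_, hb1⟩
          rw [hrecB (N + 1), hrecA N, hb1] at hb2
          simp at hb2
          rcases hb2 with h | h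
          · exact absurd h hd0
          · exact h
    have hNex : ∃ N, 2 * lam ≤ N ∧ sb N ≠ 0 := by
      by_cases hb : sb (2 * lam) = 0
      · exact ⟨2 * lam + 1, by omega, fun h => hpair (2 * lam) ⟨hb, h⟩⟩
      · exact ⟨2 * lam, le_refl _, hb⟩
    obtain ⟨N, hN, hbN⟩ := hNex
    obtain ⟨c1, c2, c3, c4⟩ := hscon N hN
    have hbe00 : be0 = 0 := by
      rcases mul_eq_zero.mp c3 with h | h
      · exact absurd h hbN
      · exact h
    have hga00 : ga0 = 0 := by
      rcases mul_eq_zero.mp c2 with h | h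
      · exact absurd h hbN
      · exact h
    have hae : de0 = a0 := by
      have h5 : sb N * de0 = sb N * a0 := by linear_combination c4 - c1
      exact mul_left_cancel₀ hbN h5
    have hd0e : a0 * de0 - be0 * ga0 = a0 * a0 := by rw [hbe00, hga00, hae]; ring
    have hc00 : a0 ≠ 0 := by
      intro h
      apply hd0
      rw [hd0e, h, mul_zero]
    have hF : ∀ M : ℕ, sa (M + 1) = -((M : K) * a0 ^ (M + 1))
        ∧ sb (M + 1) = ((M : K) + 1) * a0 ^ M := by
      intro M
      induction M with
      | zero =>
          constructor
          · rw [hrecA 0, hsb0]; simp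
          · rw [hrecB 0, hsa0, hsb0]; simp
      | succ M IH =>
          constructor
          · rw [hrecA (M + 1), hd0e, IH.2]
            push_cast
            ring
          · rw [hrecB (M + 1), IH.1, IH.2, hae]
            push_cast
            ring
    obtain ⟨M, rfl⟩ : ∃ M, N = M + 1 := ⟨N - 1, by omega⟩
    rw [(hF M).1, (hF M).2] at c1
    have h7 : a0 ^ (M + 1) = 0 := by linear_combination c1
    exact hc00 ((pow_eq_zero_iff (Nat.succ_ne_zero M)).mp h7)
  -- ## t0 = 0
  have ht0 : a0 + de0 = 0 := by
    by_contra ht0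
    have hF : ∀ M : ℕ, sa (M + 1) = 0 ∧ sb (M + 1) = (a0 + de0) ^ M := by
      intro M
      induction M with
      | zero =>
          constructor
          · rw [hrecA 0, hsb0]; simp
          · rw [hrecB 0, hsa0, hsb0]; simp
      | succ M IH =>
          constructor
          · rw [hrecA (M + 1), hd0]
            simp
          · rw [hrecB (M + 1), IH.1, IH.2]
            ring
    obtain ⟨M, hM⟩ : ∃ M : ℕ, 2 * lam = M + 1 := ⟨2 * lam - 1, by omega⟩
    obtain ⟨c1, c2, c3, c4⟩ := hscon (2 * lam) (le_refl _)
    rw [hM] at c1 c4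
    rw [(hF M).1, (hF M).2] at c1 c4
    have hp : (a0 + de0) ^ M ≠ 0 := pow_ne_zero _ ht0
    have ha00 : a0 = 0 := by
      rcases mul_eq_zero.mp (by linear_combination c1 : (a0 + de0) ^ M * a0 = 0) with h | h
      · exact absurd h hp
      · exact h
    have hde00 : de0 = 0 := by
      rcases mul_eq_zero.mp (by linear_combination c4 : (a0 + de0) ^ M * de0 = 0) with h | h
      · exact absurd h hp
      · exact h
    exact ht0 (by rw [ha00, hde00, add_zero])
  -- ## X divides trace and determinant
  have hXt : X ∣ (al + de) := by
    rw [Polynomial.X_dvd_iff, Polynomial.coeff_zero_eq_eval_zero]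
    simpa [ha0_def, hde0_def] using ht0
  have hXd : X ∣ (al * de - be * ga) := by
    rw [Polynomial.X_dvd_iff, Polynomial.coeff_zero_eq_eval_zero]
    simpa [ha0_def, hbe0_def, hga0_def, hde0_def] using hd0
  obtain ⟨t', hts⟩ := hXt
  -- ## X^2 does not divide the determinant
  have hnd2 : ¬ (X ^ 2 ∣ (al * de - be * ga)) := by
    intro h2
    obtain ⟨d', hds⟩ := h2
    have hdiv : ∀ N, X ^ N ∣ (jseq (al + de) (al * de - be * ga) N).1 ∧ X ^ (N + 1) ∣ X ^ 2 * (jseq (al + de) (al * de - be * ga) N).2 := by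
      intro N
      induction N with
      | zero =>
          constructor
          · simp [jseq]
          · simp [jseq]
      | succ N IH =>
          constructor
          · rw [show (jseq (al + de) (al * de - be * ga) (N + 1)).1 = -((al * de - be * ga) * (jseq (al + de) (al * de - be * ga) N).2) from by
              simp only [jseq]]
            rw [dvd_neg]
            rw [show (al * de - be * ga) * (jseq (al + de) (al * de - be * ga) N).2 = d' * (X ^ 2 * (jseq (al + de) (al * de - be * ga) N).2) from by
              rw [hds]; ring]
            exact (IH.2).mul_left d'
          · rw [show (jseq (al + de) (al * de - be * ga) (N + 1)).2 = (jseq (al + de) (al * de - be * ga) N).1 + (al + de) * (jseq (al + de) (al * de - be * ga) N).2 from by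
              simp only [jseq]]
            rw [mul_add]
            apply dvd_add
            · have h3 := mul_dvd_mul_left ((X : K[X]) ^ 2) IH.1
              have h4 : (X : K[X]) ^ (N + 1 + 1) ∣ X ^ 2 * X ^ N := by
                rw [← pow_add]
                exact pow_dvd_pow X (by omega)
              exact dvd_trans h4 h3
            · rw [show (X : K[X]) ^ 2 * ((al + de) * (jseq (al + de) (al * de - be * ga) N).2)
                  = t' * (X * (X ^ 2 * (jseq (al + de) (al * de - be * ga) N).2)) from by rw [hts]; ring]
              rw [show (X : K[X]) ^ (N + 1 + 1) = X * X ^ (N + 1) from by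
                rw [pow_succ']]
              exact (mul_dvd_mul_left X IH.2).mul_left t'
    have hQ1 : X ^ lam ∣ (jseq (al + de) (al * de - be * ga) (lam + 1)).1 :=
      dvd_trans (pow_dvd_pow X (by omega)) (hdiv (lam + 1)).1
    have hQ2 : X ^ lam ∣ (jseq (al + de) (al * de - be * ga) (lam + 1)).2 := by
      have h3 := (hdiv (lam + 1)).2
      have h4 : (X : K[X]) ^ 2 * X ^ lam ∣ X ^ 2 * (jseq (al + de) (al * de - be * ga) (lam + 1)).2 := by
        rw [show (X : K[X]) ^ 2 * X ^ lam = X ^ (lam + 1 + 1) from by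
          rw [← pow_add]; congr 1; omega]
        exact h3
      exact (mul_dvd_mul_iff_left (pow_ne_zero 2 Polynomial.X_ne_zero)).mp h4
    apply h1
    apply hzero (A ^ (lam + 1)) (hAB.pow_left (lam + 1))
    · rw [(hpow (lam + 1)).1]
      exact hkill _ _ (dvd_add hQ1 (hQ2.mul_right al)) (hQ2.mul_right ga)
    · rw [(hpow (lam + 1)).2]
      exact hkill _ _ (hQ2.mul_right be) (dvd_add hQ1 (hQ2.mul_right de))
  -- ## endgame
  intro hfin
  have hc0' := (hpow (2 * lam - 1)).1
  have hc1' := (hpow (2 * lam - 1)).2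
  rw [hfin, Matrix.zero_mulVec] at hc0' hc1'
  obtain ⟨k1, k2⟩ := hext _ _ hc0'.symm
  obtain ⟨k3, k4⟩ := hext _ _ hc1'.symm
  obtain ⟨du, hdu⟩ := hXd
  have hdu0 : du.eval 0 ≠ 0 := by
    intro h
    apply hnd2
    rw [hdu, sq]
    exact mul_dvd_mul_left X (by
      rw [Polynomial.X_dvd_iff, Polynomial.coeff_zero_eq_eval_zero]; exact h)
  have hodd : ∀ k : ℕ, ∃ vk wk : K[X], (jseq (al + de) (al * de - be * ga) (2 * k + 1)).2 = X ^ k * vk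
      ∧ (jseq (al + de) (al * de - be * ga) (2 * k + 2)).2 = X ^ (k + 1) * wk ∧ vk.eval 0 ≠ 0 := by
    intro k
    induction k with
    | zero =>
        refine ⟨1, t', ?_, ?_, ?_⟩
        · simp [jseq]
        · rw [show (jseq (al + de) (al * de - be * ga) 2).2 = (jseq (al + de) (al * de - be * ga) 1).1 + (al + de) * (jseq (al + de) (al * de - be * ga) 1).2 from by simp only [jseq]]
          rw [show (jseq (al + de) (al * de - be * ga) 1).1 = -((al * de - be * ga) * (jseq (al + de) (al * de - be * ga) 0).2) from by simp only [jseq]]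
          rw [show (jseq (al + de) (al * de - be * ga) 1).2 = (jseq (al + de) (al * de - be * ga) 0).1 + (al + de) * (jseq (al + de) (al * de - be * ga) 0).2 from by simp only [jseq]]
          rw [show (jseq (al + de) (al * de - be * ga) 0).1 = 1 from rfl, show (jseq (al + de) (al * de - be * ga) 0).2 = 0 from rfl, hts]
          ring
        · simp
    | succ k IH =>
        obtain ⟨vk, wk, hv1, hw1, hv0⟩ := IH
        refine ⟨X * t' * wk - du * vk, t' * (X * t' * wk - du * vk) - du * wk, ?_, ?_, ?_⟩
        · rw [show 2 * (k + 1) + 1 = (2 * k + 2) + 1 from by ring]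
          rw [show (jseq (al + de) (al * de - be * ga) ((2 * k + 2) + 1)).2
              = (jseq (al + de) (al * de - be * ga) (2 * k + 2)).1 + (al + de) * (jseq (al + de) (al * de - be * ga) (2 * k + 2)).2 from by simp only [jseq]]
          rw [show (jseq (al + de) (al * de - be * ga) (2 * k + 2)).1
              = -((al * de - be * ga) * (jseq (al + de) (al * de - be * ga) (2 * k + 1)).2) from by simp only [jseq]]
          rw [hv1, hw1, hdu, hts]
          ring
        · rw [show 2 * (k + 1) + 2 = ((2 * k + 2) + 1) + 1 from by ring]
          rw [show (jseq (al + de) (al * de - be * ga) (((2 * k + 2) + 1) + 1)).2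
              = (jseq (al + de) (al * de - be * ga) ((2 * k + 2) + 1)).1 + (al + de) * (jseq (al + de) (al * de - be * ga) ((2 * k + 2) + 1)).2 from by
            simp only [jseq]]
          rw [show (jseq (al + de) (al * de - be * ga) ((2 * k + 2) + 1)).1
              = -((al * de - be * ga) * (jseq (al + de) (al * de - be * ga) (2 * k + 2)).2) from by simp only [jseq]]
          rw [show (jseq (al + de) (al * de - be * ga) ((2 * k + 2) + 1)).2
              = (jseq (al + de) (al * de - be * ga) (2 * k + 2)).1 + (al + de) * (jseq (al + de) (al * de - be * ga) (2 * k + 2)).2 from by simp only [jseq]]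
          rw [show (jseq (al + de) (al * de - be * ga) (2 * k + 2)).1
              = -((al * de - be * ga) * (jseq (al + de) (al * de - be * ga) (2 * k + 1)).2) from by simp only [jseq]]
          rw [hv1, hw1, hdu, hts]
          ring
        · simp only [Polynomial.eval_sub, Polynomial.eval_mul, Polynomial.eval_X]
          intro hcontra
          exact mul_ne_zero hdu0 hv0 (by linear_combination -hcontra)
  obtain ⟨vk, wk, hv1, _, hv0⟩ := hodd (lam - 1)
  rw [show 2 * (lam - 1) + 1 = 2 * lam - 1 from by omega] at hv1
  have hcancel : ∀ p : K[X], X ^ lam ∣ (jseq (al + de) (al * de - be * ga) (2 * lam - 1)).2 * p → p.eval 0 = 0 := by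
    intro p hp
    have h5 : X ^ (lam - 1) * X ∣ X ^ (lam - 1) * (vk * p) := by
      rw [show (X : K[X]) ^ (lam - 1) * X = X ^ lam from by
        rw [← pow_succ]; congr 1; omega]
      rw [show (X : K[X]) ^ (lam - 1) * (vk * p) = (jseq (al + de) (al * de - be * ga) (2 * lam - 1)).2 * p from by
        rw [hv1]; ring]
      exact hp
    have h6 := (mul_dvd_mul_iff_left (pow_ne_zero (lam - 1) Polynomial.X_ne_zero)).mp h5
    rw [Polynomial.X_dvd_iff, Polynomial.coeff_zero_eq_eval_zero] at h6
    simp only [Polynomial.eval_mul] at h6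
    rcases mul_eq_zero.mp h6 with h | h
    · exact absurd h hv0
    · exact h
  have hbe00 : be0 = 0 := by rw [hbe0_def]; exact hcancel be k3
  have hga00 : ga0 = 0 := by rw [hga0_def]; exact hcancel ga k2
  have ha00 : a0 = 0 := by
    have h8 : a0 * de0 = 0 := by
      have h9 : a0 * de0 = be0 * ga0 := by linear_combination hd0
      rw [h9, hbe00, zero_mul]
    have h9 : de0 = -a0 := by linear_combination ht0
    rw [h9] at h8
    have h10 : a0 * a0 = 0 := by linear_combination -h8
    exact mul_self_eq_zero.mp h10
  have hde00 : de0 = 0 := by linear_combination ht0 - ha00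
  apply hnd2
  have hdvd0 : ∀ p : K[X], p.eval 0 = 0 → X ∣ p := by
    intro p hp
    rw [Polynomial.X_dvd_iff, Polynomial.coeff_zero_eq_eval_zero]
    exact hp
  have h11 : X * X ∣ al * de := mul_dvd_mul (hdvd0 al (by rw [← ha0_def]; exact ha00))
    (hdvd0 de (by rw [← hde0_def]; exact hde00))
  have h12 : X * X ∣ be * ga := mul_dvd_mul (hdvd0 be (by rw [← hbe0_def]; exact hbe00))
    (hdvd0 ga (by rw [← hga0_def]; exact hga00))
  rw [sq]
  exact dvd_sub h11 h12

end Stmt15Aux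

/-- If `B` has Jordan type `(λ, λ)` and a nilpotent `A` commuting with `B` has type
`μ`, then either `μ = (2λ)` or `μ₁ ≤ λ + 1`. -/
theorem stmt15 {K : Type*} [Field K] [IsAlgClosed K] [CharZero K]
    (lam : ℕ) (hl : 0 < lam)
    (B : Matrix (Fin (2 * lam)) (Fin (2 * lam)) K) (hB : HasJordanType B [lam, lam])
    (A : Matrix (Fin (2 * lam)) (Fin (2 * lam)) K) (hc : A * B = B * A)
    (mu : List ℕ) (hA : HasJordanType A mu) :
    mu = [2 * lam] ∨ ∀ x ∈ mu, x ≤ lam + 1 := by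
  classical
  obtain ⟨⟨hsort, hpos, hsum⟩, hrank⟩ := hA
  by_cases hcase : ∀ x ∈ mu, x ≤ lam + 1
  · exact Or.inr hcase
  left
  push_neg at hcase
  obtain ⟨x, hx, hxgt⟩ := hcase
  have hB0 : B ^ lam = 0 := by
    apply (Stmt15Aux.rank_zero_iff _).mp
    rw [hB.2 lam]
    simp
  have hBr : (B ^ (lam - 1)).rank = 2 := by
    rw [hB.2 (lam - 1)]
    simp
    omega
  have hA2l : A ^ (2 * lam) = 0 := by
    apply (Stmt15Aux.rank_zero_iff _).mp
    rw [hrank (2 * lam)]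
    apply List.sum_eq_zero
    intro y hy
    rw [List.mem_map] at hy
    obtain ⟨p, hp, rfl⟩ := hy
    have hle : p ≤ mu.sum := List.single_le_sum (fun _ _ => Nat.zero_le _) p hp
    omega
  have h1 : A ^ (lam + 1) ≠ 0 := by
    intro h
    have hr := hrank (lam + 1)
    rw [h, Matrix.rank_zero] at hr
    have hmem : x - (lam + 1) ∈ mu.map (fun p => p - (lam + 1)) :=
      List.mem_map_of_mem hx
    have hle := List.single_le_sum (fun y (_ : y ∈ mu.map (fun p => p - (lam + 1))) =>
      Nat.zero_le y) _ hmem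
    omega
  have h2 := Stmt15Aux.crux lam hl A B hc hB0 hBr hA2l h1
  have h3 : (mu.map (fun p => p - (2 * lam - 1))).sum ≠ 0 := by
    rw [← hrank]
    intro h
    exact h2 ((Stmt15Aux.rank_zero_iff _).mp h)
  obtain ⟨p, hp, hpbig⟩ : ∃ p ∈ mu, 2 * lam ≤ p := by
    by_contra hno
    push_neg at hno
    apply h3
    apply List.sum_eq_zero
    intro y hy
    rw [List.mem_map] at hy
    obtain ⟨q, hq, rfl⟩ := hy
    have := hno q hq
    omega
  obtain ⟨s1, s2, rfl⟩ := List.append_of_mem hp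
  have hsum' : s1.sum + (p + s2.sum) = 2 * lam := by
    rw [← List.sum_cons, ← List.sum_append]
    exact hsum
  have hs1 : s1 = [] := by
    rcases s1 with _ | ⟨a, t⟩
    · rfl
    · exfalso
      have hpos' := hpos a (by simp)
      have hle : a ≤ (a :: t).sum :=
        List.single_le_sum (fun _ _ => Nat.zero_le _) a (by simp)
      omega
  have hs2 : s2 = [] := by
    rcases s2 with _ | ⟨a, t⟩
    · rfl
    · exfalso
      have hpos' := hpos a (by simp)
      have hle : a ≤ (a :: t).sum :=
        List.single_le_sum (fun _ _ => Nat.zero_le _) a (by simp)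
      omega
  have hp2 : p = 2 * lam := by omega
  rw [hs1, hs2, hp2]
  rfl
end
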